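/- Suppose in addition that β > max(η_c, −μ(0)/μ′(0)), and let c* ∈ (0,∞) be the unique solution of c*·I(1/c*) = β. Then c* admits the variational representation c* = inf_{λ ∈ (0,∞)} (λ + β)/(−μ(−λ)). (Note that −μ(−λ) > 0 for every λ > 0, since μ is strictly increasing with μ(0) ≤ 0.) -/
import Mathlib


open Filter Set

/-- The Legendre transform `I(a) = sup_{η < η_c} (a·η − μ(η))`. -/
noncomputable def legendreI (μ : ℝ → ℝ) (ηc : ℝ) (a : ℝ) : ℝ :=
  sSup ((fun η => a * η - μ η) '' Set.Iio ηc)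

/-- If `β > max(η_c, −μ(0)/μ'(0))` and `c*` is the unique positive solution of
`c*·I(1/c*) = β`, then `−μ(−λ) > 0` for every `λ > 0` and `c*` admits the variational
representation `c* = inf_{λ > 0} (λ + β)/(−μ(−λ))`. -/
theorem stmt11 (μ μ' : ℝ → ℝ) (ηc : ℝ) (hηc : 0 < ηc)
    (hconv : ConvexOn ℝ (Set.Iio ηc) μ)
    (hderiv : ∀ η < ηc, HasDerivAt μ (μ' η) η)
    (hcont : ContinuousOn μ' (Set.Iio ηc))
    (hpos : ∀ η < ηc, 0 < μ' η)
    (hmono : StrictMonoOn μ' (Set.Iio ηc))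
    (hlim0 : Tendsto μ' atBot (nhds 0))
    (hμ0 : μ 0 ≤ 0)
    (hμbot : Tendsto μ atBot atBot)
    (β : ℝ) (hβ : max ηc (-μ 0 / μ' 0) < β)
    (cstar : ℝ) (hcstar : 0 < cstar)
    (heq : cstar * legendreI μ ηc (1 / cstar) = β)
    (huniq : ∀ c, 0 < c → c * legendreI μ ηc (1 / c) = β → c = cstar) :
    (∀ l : ℝ, 0 < l → 0 < -μ (-l)) ∧
    cstar = sInf ((fun l : ℝ => (l + β) / (-μ (-l))) '' Set.Ioi 0) := by
  have hβ1 : ηc < β := lt_of_le_of_lt (le_max_left _ _) hβ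
  have hβ2 : -μ 0 / μ' 0 < β := lt_of_le_of_lt (le_max_right _ _) hβ
  have hβpos : 0 < β := hηc.trans hβ1
  have hμcont : ContinuousOn μ (Set.Iio ηc) := fun x hx =>
    (hderiv x hx).continuousAt.continuousWithinAt
  -- tangent line inequality via MVT
  have htan : ∀ x, x < ηc → ∀ y, y < ηc → μ x + μ' x * (y - x) ≤ μ y := by
    intro x hx y hy
    rcases lt_trichotomy x y with hxy | rfl | hxy
    · obtain ⟨c, hc, hceq⟩ := exists_hasDerivAt_eq_slope μ μ' hxy
        (hμcont.mono (fun z hz => lt_of_le_of_lt hz.2 hy))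
        (fun z hz => hderiv z (hz.2.trans hy))
      have h1 : μ' x ≤ μ' c := (hmono (hx) (hc.2.trans hy) hc.1).le
      have h2 : μ' c * (y - x) = μ y - μ x := by
        rw [hceq]; exact div_mul_cancel₀ _ (by linarith : y - x ≠ 0)
      nlinarith [mul_le_mul_of_nonneg_right h1 (by linarith : (0:ℝ) ≤ y - x)]
    · simp
    · obtain ⟨c, hc, hceq⟩ := exists_hasDerivAt_eq_slope μ μ' hxy
        (hμcont.mono (fun z hz => lt_of_le_of_lt hz.2 hx))
        (fun z hz => hderiv z (hz.2.trans hx))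
      have h1 : μ' c ≤ μ' x := (hmono (hc.2.trans hx) hx hc.2).le
      have h2 : μ' c * (x - y) = μ x - μ y := by
        rw [hceq]; exact div_mul_cancel₀ _ (by linarith : x - y ≠ 0)
      nlinarith [mul_le_mul_of_nonneg_right h1 (by linarith : (0:ℝ) ≤ x - y)]
  -- part 1
  have part1 : ∀ l : ℝ, 0 < l → 0 < -μ (-l) := by
    intro l hl
    have hml : -l < ηc := by linarith
    have := htan (-l) hml 0 hηc
    nlinarith [mul_pos (hpos (-l) hml) hl]
  refine ⟨part1, ?_⟩
  -- arithmetic helpers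
  have hmul : ∀ x y : ℝ, cstar * (1 / cstar * x - y) = x - cstar * y := by
    intro x y; field_simp
  have hmul' : ∀ x y : ℝ, 1 / cstar * (x - cstar * y) = 1 / cstar * x - y := by
    intro x y; field_simp
  have hdivβ : cstar * (β / cstar) = β := by field_simp
  set S : Set ℝ := (fun η => 1 / cstar * η - μ η) '' Set.Iio ηc with hS
  have heq' : cstar * sSup S = β := heq
  have hT : sSup S = β / cstar := by
    rw [eq_div_iff hcstar.ne']; linarith [heq']
  have hne : S.Nonempty := ⟨1 / cstar * 0 - μ 0, ⟨0, hηc, rfl⟩⟩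
  have hbdd : BddAbove S := by
    by_contra h
    rw [Real.sSup_of_not_bddAbove h] at hT
    exact absurd hT.symm (div_pos hβpos hcstar).ne'
  -- every value is at most β
  have hub : ∀ η, η < ηc → η - cstar * μ η ≤ β := by
    intro η hη
    have h1 : 1 / cstar * η - μ η ≤ sSup S := le_csSup hbdd ⟨η, hη, rfl⟩
    have h2 := mul_le_mul_of_nonneg_left h1 hcstar.le
    rw [hmul, hT, hdivβ] at h2
    exact h2
  -- cstar is a lower bound of the variational family
  have hlb : ∀ l : ℝ, 0 < l → cstar ≤ (l + β) / (-μ (-l)) := by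
    intro l hl
    have hml : -l < ηc := by linarith
    have h1 := hub (-l) hml
    rw [le_div_iff₀ (part1 l hl)]
    nlinarith
  have hμ'0 : 0 < μ' 0 := hpos 0 hηc
  -- step: 1/cstar < μ' 0
  have h0 : 1 / cstar < μ' 0 := by
    by_contra h
    push_neg at h
    have hk : cstar * μ' 0 ≤ 1 := by
      rw [le_div_iff₀ hcstar] at h; linarith
    set M : ℝ := ηc * (1 - cstar * μ' 0) - cstar * μ 0 with hM
    have hMβ : M < β := by
      have hβ2' : -μ 0 < β * μ' 0 := by
        rw [div_lt_iff₀ hμ'0] at hβ2; linarith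
      nlinarith [mul_lt_mul_of_pos_left hβ2' hcstar,
        mul_le_mul_of_nonneg_right hk (by linarith : (0:ℝ) ≤ β - ηc)]
    have hboundS : ∀ x ∈ S, x ≤ 1 / cstar * M := by
      rintro x ⟨η, hη, rfl⟩
      have hη' : η < ηc := hη
      have ht := htan 0 hηc η hη'
      have hgle : η - cstar * μ η ≤ M := by
        nlinarith [mul_le_mul_of_nonneg_left ht hcstar.le,
          mul_le_mul_of_nonneg_right hk (by linarith : (0:ℝ) ≤ ηc - η)]
      have := mul_le_mul_of_nonneg_left hgle (by positivity : (0:ℝ) ≤ 1 / cstar)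
      rw [hmul'] at this
      linarith
    have hfin : sSup S ≤ 1 / cstar * M := csSup_le hne hboundS
    rw [hT] at hfin
    have : β ≤ M := by
      have := mul_le_mul_of_nonneg_left hfin hcstar.le
      rw [hdivβ] at this
      nlinarith [hmul M 0]
    linarith
  -- find η* < 0 with μ' η* = 1/cstar
  have hev : ∀ᶠ x in atBot, μ' x < 1 / cstar := by
    have : (0:ℝ) < 1 / cstar := by positivity
    exact hlim0.eventually (eventually_lt_nhds this)
  obtain ⟨A, hA⟩ := eventually_atBot.mp hev
  set A' : ℝ := min A (-1) with hA'
  have hA'neg : A' < 0 := lt_of_le_of_lt (min_le_right _ _) (by norm_num)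
  have hA'lt : μ' A' < 1 / cstar := hA A' (min_le_left _ _)
  have hsub : Set.Icc A' 0 ⊆ Set.Iio ηc := fun z hz => lt_of_le_of_lt hz.2 hηc
  have hIVT := intermediate_value_Ioo hA'neg.le (hcont.mono hsub)
  obtain ⟨ηs, hηs, hηseq⟩ := hIVT ⟨hA'lt, h0⟩
  have hηsneg : ηs < 0 := hηs.2
  have hηslt : ηs < ηc := lt_trans hηsneg hηc
  have hone : cstar * μ' ηs = 1 := by rw [hηseq]; field_simp
  -- g is maximized at ηs
  have hgmax : ∀ η, η < ηc → η - cstar * μ η ≤ ηs - cstar * μ ηs := by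
    intro η hη
    have ht := htan ηs hηslt η hη
    have h3 := mul_le_mul_of_nonneg_left ht hcstar.le
    nlinarith [h3, hone]
  -- β is attained: β = ηs - cstar * μ ηs
  have hβeq : ηs - cstar * μ ηs = β := by
    refine le_antisymm (hub ηs hηslt) ?_
    have hboundS : ∀ x ∈ S, x ≤ 1 / cstar * ηs - μ ηs := by
      rintro x ⟨η, hη, rfl⟩
      have hη' : η < ηc := hη
      have := mul_le_mul_of_nonneg_left (hgmax η hη')
        (by positivity : (0:ℝ) ≤ 1 / cstar)
      rw [hmul', hmul'] at this
      exact this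
    have hfin : sSup S ≤ 1 / cstar * ηs - μ ηs := csSup_le hne hboundS
    rw [hT] at hfin
    have := mul_le_mul_of_nonneg_left hfin hcstar.le
    rw [hdivβ, hmul] at this
    exact this
  have hμηs : 0 < -μ ηs := by
    have := part1 (-ηs) (by linarith)
    rwa [neg_neg] at this
  -- cstar is attained in the variational family
  have hmem : cstar ∈ (fun l : ℝ => (l + β) / (-μ (-l))) '' Set.Ioi 0 := by
    refine ⟨-ηs, by simpa using hηsneg, ?_⟩
    show (-ηs + β) / -μ (-(-ηs)) = cstar
    rw [neg_neg, div_eq_iff hμηs.ne']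
    linarith
  have hlbset : ∀ x ∈ (fun l : ℝ => (l + β) / (-μ (-l))) '' Set.Ioi 0, cstar ≤ x := by
    rintro x ⟨l, hl, rfl⟩
    exact hlb l hl
  exact le_antisymm (le_csInf ⟨cstar, hmem⟩ hlbset)
    (csInf_le ⟨cstar, fun x hx => hlbset x hx⟩ hmem)
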